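/- arXiv:1111.4013 — 2 statements merged into one kernel-verified Lean document; each statement's English description precedes it below -/
import Mathlib

section
/- Let (X,d) be a metric space, p ∈ X, r > 0 such that the closed ball B(p,2r) is compact, and let f : B(p,2r) → ℝ be continuous, bounded, nonnegative with f(p) > 0. Then there exists q ∈ B(p,2r) such that f(q) ≥ f(p), and setting α = f(p)/f(q), one has d(p,q) ≤ 2r(1-α) and f(q') < 2 f(q) for all q' ∈ B(q, α r). -/
open Metric Set

/-- Perelman's point-picking lemma. -/
theorem point_picking {X : Type*} [MetricSpace X] (p : X) (r : ℝ) (hr : 0 < r)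
    (hcompact : IsCompact (closedBall p (2 * r)))
    (f : X → ℝ) (hcont : ContinuousOn f (ball p (2 * r)))
    (hbd : ∃ M : ℝ, ∀ x ∈ ball p (2 * r), f x ≤ M)
    (hnonneg : ∀ x ∈ ball p (2 * r), 0 ≤ f x)
    (hfp : 0 < f p) :
    ∃ q ∈ ball p (2 * r),
      f p ≤ f q ∧
      dist p q ≤ 2 * r * (1 - f p / f q) ∧
      ∀ q' ∈ ball q ((f p / f q) * r), f q' < 2 * f q := by
  by_contra hcon
  push_neg at hcon
  set P : ℕ → X → Prop := fun n q =>
    q ∈ ball p (2 * r) ∧ 2 ^ n * f p ≤ f q ∧ dist p q ≤ 2 * r * (1 - f p / f q) with hP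
  have key : ∀ n, ∃ q, P n q := by
    intro n
    induction n with
    | zero =>
      refine ⟨p, mem_ball_self (by positivity), by norm_num, ?_⟩
      simp [div_self hfp.ne']
    | succ n ih =>
      obtain ⟨q, hqb, hq2, hqd⟩ := ih
      have hfq : 0 < f q := lt_of_lt_of_le (by positivity) hq2
      have h2n : (1:ℝ) ≤ 2 ^ n := one_le_pow₀ (by norm_num)
      have hple : f p ≤ f q := le_trans (by nlinarith) hq2
      obtain ⟨q', hq'b, hq'f⟩ := hcon q hqb hple hqd
      have hα : 0 < f p / f q := div_pos hfp hfq
      have hα1 : f p / f q ≤ 1 := (div_le_one hfq).mpr hple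
      have hd : dist q q' < (f p / f q) * r := by
        rw [dist_comm]; exact mem_ball.mp hq'b
      have hfq' : 2 * f q ≤ f q' := hq'f
      have hdp : dist p q' < 2 * r - (f p / f q) * r := by
        have := dist_triangle p q q'
        nlinarith
      have hq'mem : q' ∈ ball p (2 * r) := by
        rw [mem_ball, dist_comm]
        nlinarith
      refine ⟨q', hq'mem, by rw [pow_succ]; nlinarith, ?_⟩
      have hfq'pos : 0 < f q' := by nlinarith
      have hle : f p / f q' ≤ (f p / f q) / 2 := by
        rw [div_div]
        exact div_le_div_of_nonneg_left hfp.le (by positivity) (by linarith)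
      nlinarith
  obtain ⟨M, hM⟩ := hbd
  obtain ⟨n, hn⟩ := pow_unbounded_of_one_lt (M / f p) (y := (2:ℝ)) (by norm_num)
  obtain ⟨q, hqb, hq2, -⟩ := key n
  have := hM q hqb
  have : M / f p < f q / f p := lt_of_lt_of_le hn (by
    rw [le_div_iff₀ hfp]; exact hq2)
  have := (div_lt_div_iff_of_pos_right hfp).mp this
  linarith
end

section
/- Let τ > 0, n ≥ 1, and μ a Borel measure on a metric space (X,d) with base point p such that V(τ) = ∫_X (4πτ)^{-n/2} e^{-d(p,x)²/(4τ)} dμ(x) = 1 and such that μ(B(p,r)) ≤ ω_n rⁿ for all r > 0 with equality in the limit r → 0 (i.e., μ(B(p,r))/ (ω_n rⁿ) → 1 as r → 0). If moreover r ↦ μ(B(p,r))/(ω_n rⁿ) is non-increasing, then μ(B(p,r)) = ω_n rⁿ for all r > 0. -/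
open Real MeasureTheory Metric Filter Set
open scoped ENNReal

/-- Measure-theoretic rigidity: reduced volume equal to 1 together with the
Bishop–Gromov monotone volume ratio with limit 1 at 0 forces the volume ratio
to be identically 1. -/
theorem reduced_volume_one_rigidity {X : Type*} [MetricSpace X] [MeasurableSpace X]
    [BorelSpace X] (μ : Measure X) (p : X) (n : ℕ) (hn : 1 ≤ n) (τ : ℝ) (hτ : 0 < τ)
    (ω : ℝ) (hω : ω = (volume (ball (0 : EuclideanSpace ℝ (Fin n)) 1)).toReal)
    (hV : ∫ x, (4 * π * τ) ^ (-(n : ℝ) / 2) * Real.exp (-dist p x ^ 2 / (4 * τ)) ∂μ = 1)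
    (hvol : ∀ r > (0 : ℝ), μ (ball p r) ≤ ENNReal.ofReal (ω * r ^ n))
    (hratio_lim : Tendsto (fun r : ℝ => (μ (ball p r)).toReal / (ω * r ^ n))
      (nhdsWithin 0 (Ioi 0)) (nhds 1))
    (hratio_mono : ∀ r s : ℝ, 0 < r → r ≤ s →
      (μ (ball p s)).toReal / (ω * s ^ n) ≤ (μ (ball p r)).toReal / (ω * r ^ n)) :
    ∀ r > (0 : ℝ), μ (ball p r) = ENNReal.ofReal (ω * r ^ n) := by
  intro r hr
  have hπτ : (0 : ℝ) < 4 * π * τ := by positivity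
  set c : ℝ := (4 * π * τ) ^ (-(n : ℝ) / 2) with hc
  have hcpos : 0 < c := Real.rpow_pos_of_pos hπτ _
  -- basic facts about ω and Euclidean balls
  haveI : Nontrivial (EuclideanSpace ℝ (Fin n)) := by
    apply Module.nontrivial_of_finrank_pos (R := ℝ)
    rw [finrank_euclideanSpace_fin]; omega
  have hball_top : volume (ball (0 : EuclideanSpace ℝ (Fin n)) 1) ≠ ∞ :=
    measure_ball_lt_top.ne
  have hball_pos : 0 < volume (ball (0 : EuclideanSpace ℝ (Fin n)) 1) :=
    measure_ball_pos _ _ one_pos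
  have hωpos : 0 < ω := by
    rw [hω]; exact ENNReal.toReal_pos hball_pos.ne' hball_top
  have hωball : ENNReal.ofReal ω = volume (ball (0 : EuclideanSpace ℝ (Fin n)) 1) := by
    rw [hω, ENNReal.ofReal_toReal hball_top]
  have hEball : ∀ u : ℝ, 0 ≤ u →
      volume (ball (0 : EuclideanSpace ℝ (Fin n)) u) = ENNReal.ofReal (ω * u ^ n) := by
    intro u hu
    rw [Measure.addHaar_ball _ _ hu, finrank_euclideanSpace_fin,
      ENNReal.ofReal_mul hωpos.le, ← hωball, mul_comm]
  -- the radius function for level sets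
  set s : ℝ → ℝ := fun t => Real.sqrt (4 * τ * Real.log (c / t)) with hsdef
  have hsnonneg : ∀ t, 0 ≤ s t := fun t => Real.sqrt_nonneg _
  have key : ∀ t y : ℝ, 0 < t → 0 ≤ y →
      (t < c * Real.exp (-y ^ 2 / (4 * τ)) ↔ y < s t) := by
    intro t y ht hy
    have h4 : (0:ℝ) < 4 * τ := by positivity
    have hlog : Real.log (t / c) = -Real.log (c / t) := by
      rw [← Real.log_inv, inv_div]
    rw [hsdef]
    rw [Real.lt_sqrt hy, mul_comm c (Real.exp (-y ^ 2 / (4 * τ))),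
      ← div_lt_iff₀ hcpos, ← Real.log_lt_iff_lt_exp (div_pos ht hcpos), hlog,
      neg_div, neg_lt_neg_iff, div_lt_iff₀ h4, mul_comm (Real.log (c / t)) (4 * τ)]
  -- level sets
  set f : X → ℝ := fun x => c * Real.exp (-dist p x ^ 2 / (4 * τ)) with hfdef
  have hXlevel : ∀ t : ℝ, 0 < t → {a : X | t < f a} = ball p (s t) := by
    intro t ht
    ext x
    simp only [hfdef, mem_setOf_eq, mem_ball]
    rw [dist_comm x p]
    exact key t (dist p x) ht dist_nonneg
  set g : EuclideanSpace ℝ (Fin n) → ℝ := fun v => c * Real.exp (-‖v‖ ^ 2 / (4 * τ)) with hgdef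
  have hElevel : ∀ t : ℝ, 0 < t →
      {v : EuclideanSpace ℝ (Fin n) | t < g v} = ball 0 (s t) := by
    intro t ht
    ext v
    simp only [hgdef, mem_setOf_eq, mem_ball, dist_zero_right]
    exact key t ‖v‖ ht (norm_nonneg v)
  -- the Euclidean Gaussian integral is 1
  have hg_cont : Continuous g := by
    apply continuous_const.mul
    apply Real.continuous_exp.comp
    exact (continuous_norm.pow 2).neg.div_const _
  have hg_nonneg : ∀ v, 0 ≤ g v := fun v => by positivity
  have hg_integral : ∫ v, g v = 1 := by
    have h1 : ∀ v : EuclideanSpace ℝ (Fin n),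
        g v = c * Real.exp (-(1 / (4 * τ)) * ‖v‖ ^ 2) := by
      intro v
      rw [hgdef]
      ring_nf
    simp_rw [h1]
    rw [MeasureTheory.integral_const_mul, GaussianFourier.integral_rexp_neg_mul_sq_norm (by positivity),
      finrank_euclideanSpace_fin]
    have h2 : (π / (1 / (4 * τ))) = 4 * π * τ := by
      field_simp
    rw [h2, hc, ← Real.rpow_add hπτ,
      show (-(n:ℝ) / 2 + (n:ℝ) / 2) = 0 by ring, Real.rpow_zero]
  -- layer cake on the Euclidean side
  have hEl : ∫⁻ t in Ioi (0 : ℝ),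
      volume (ball (0 : EuclideanSpace ℝ (Fin n)) (s t)) = 1 := by
    have lc := lintegral_eq_lintegral_meas_lt volume
      (Eventually.of_forall hg_nonneg) hg_cont.aemeasurable
    have heq : ∫ v, g v = (∫⁻ v, ENNReal.ofReal (g v)).toReal :=
      integral_eq_lintegral_of_nonneg_ae (Eventually.of_forall hg_nonneg)
        hg_cont.aestronglyMeasurable
    have hfin : ∫⁻ v, ENNReal.ofReal (g v) ≠ ∞ := by
      intro h
      rw [hg_integral, h] at heq
      simp at heq
    have h1 : ∫⁻ v, ENNReal.ofReal (g v) = 1 := by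
      rw [← ENNReal.ofReal_toReal hfin, ← heq, hg_integral, ENNReal.ofReal_one]
    rw [← h1, lc]
    exact setLIntegral_congr_fun measurableSet_Ioi
      (fun t ht => by simp only [hElevel t ht])
  -- layer cake on the μ side
  have hf_cont : Continuous f := by
    apply continuous_const.mul
    apply Real.continuous_exp.comp
    exact ((continuous_const.dist continuous_id).pow 2).neg.div_const _
  have hf_nonneg : ∀ x, 0 ≤ f x := fun x => by positivity
  have hXl : ∫⁻ x, ENNReal.ofReal (f x) ∂μ = ∫⁻ t in Ioi (0 : ℝ), μ (ball p (s t)) := by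
    rw [lintegral_eq_lintegral_meas_lt μ (Eventually.of_forall hf_nonneg)
      hf_cont.aemeasurable]
    exact setLIntegral_congr_fun measurableSet_Ioi
      (fun t ht => by simp only [hXlevel t ht])
  -- general comparison of the level set measures
  have hcompare : ∀ t : ℝ, 0 < t →
      μ (ball p (s t)) ≤ volume (ball (0 : EuclideanSpace ℝ (Fin n)) (s t)) := by
    intro t ht
    rcases eq_or_lt_of_le (hsnonneg t) with h0 | h0
    · have h0' : s t ≤ 0 := le_of_eq h0.symm
      simp [ball_eq_empty.2 h0']
    · rw [hEball _ (hsnonneg t)]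
      exact hvol _ h0
  -- main step: the volume ratio at r equals 1
  have hmain : (μ (ball p r)).toReal = ω * r ^ n := by
    have hfinr : μ (ball p r) ≠ ∞ := by
      exact ((hvol r hr).trans_lt ENNReal.ofReal_lt_top).ne
    have hle : (μ (ball p r)).toReal ≤ ω * r ^ n :=
      ENNReal.toReal_le_of_le_ofReal (by positivity) (hvol r hr)
    by_contra hne
    have hlt : (μ (ball p r)).toReal < ω * r ^ n := lt_of_le_of_ne hle hne
    set ρ : ℝ := (μ (ball p r)).toReal / (ω * r ^ n) with hρ
    have hρnonneg : 0 ≤ ρ := by positivity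
    have hρlt : ρ < 1 := by
      rw [hρ, div_lt_one (by positivity)]
      exact hlt
    set δ : ℝ≥0∞ := ENNReal.ofReal ((1 - ρ) * ω * r ^ n) with hδ
    have hδpos : δ ≠ 0 := by
      rw [hδ]
      simp only [ne_eq, ENNReal.ofReal_eq_zero, not_le]
      have h1 : (0:ℝ) < 1 - ρ := by linarith
      have h2 : (0:ℝ) < r ^ n := pow_pos hr n
      exact mul_pos (mul_pos h1 hωpos) h2
    set t₀ : ℝ := c * Real.exp (-r ^ 2 / (4 * τ)) with ht₀def
    have ht₀pos : 0 < t₀ := by positivity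
    -- on (0, t₀) the deficit is at least δ
    have hdeficit : ∀ t ∈ Ioo (0 : ℝ) t₀,
        μ (ball p (s t)) + δ ≤ volume (ball (0 : EuclideanSpace ℝ (Fin n)) (s t)) := by
      intro t htm
      have hrst : r < s t := (key t r htm.1 hr.le).1 htm.2
      have hstpos : 0 < s t := hr.trans hrst
      have hmono := hratio_mono r (s t) hr hrst.le
      rw [← hρ] at hmono
      have h1 : (μ (ball p (s t))).toReal ≤ ρ * (ω * s t ^ n) := by
        rw [div_le_iff₀ (by positivity)] at hmono
        linarith [hmono]
      have hfinst : μ (ball p (s t)) ≠ ∞ :=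
        ((hvol _ hstpos).trans_lt ENNReal.ofReal_lt_top).ne
      have h2 : μ (ball p (s t)) ≤ ENNReal.ofReal (ρ * (ω * s t ^ n)) := by
        rw [← ENNReal.ofReal_toReal hfinst]
        exact ENNReal.ofReal_le_ofReal h1
      rw [hEball _ (hsnonneg t)]
      calc μ (ball p (s t)) + δ
          ≤ ENNReal.ofReal (ρ * (ω * s t ^ n)) + ENNReal.ofReal ((1 - ρ) * ω * r ^ n) :=
            add_le_add h2 le_rfl
        _ = ENNReal.ofReal (ρ * (ω * s t ^ n) + (1 - ρ) * ω * r ^ n) := by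
            rw [ENNReal.ofReal_add (by positivity)
              (mul_nonneg (mul_nonneg (by linarith) hωpos.le) (pow_pos hr n).le)]
        _ ≤ ENNReal.ofReal (ω * s t ^ n) := by
            apply ENNReal.ofReal_le_ofReal
            have hpow : r ^ n ≤ s t ^ n := pow_le_pow_left₀ hr.le hrst.le n
            have hkey : (1 - ρ) * ω * r ^ n ≤ (1 - ρ) * ω * s t ^ n :=
              mul_le_mul_of_nonneg_left hpow
                (mul_nonneg (by linarith) hωpos.le)
            have hsum : ρ * (ω * s t ^ n) + (1 - ρ) * ω * s t ^ n = ω * s t ^ n := by ring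
            linarith [hkey, hsum]
    -- integrate the deficit
    have hsplit : Ioo (0 : ℝ) t₀ ∪ Ici t₀ = Ioi 0 := Ioo_union_Ici_eq_Ioi ht₀pos
    have hdisj : Disjoint (Ioo (0 : ℝ) t₀) (Ici t₀) := by
      rw [Set.disjoint_left]
      rintro x ⟨_, h2⟩ h3
      exact absurd h3 (not_le.2 h2)
    have hIoo : (∫⁻ t in Ioo (0 : ℝ) t₀, μ (ball p (s t))) + δ * ENNReal.ofReal t₀
        ≤ ∫⁻ t in Ioo (0 : ℝ) t₀, volume (ball (0 : EuclideanSpace ℝ (Fin n)) (s t)) := by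
      have h1 : (∫⁻ t in Ioo (0 : ℝ) t₀, μ (ball p (s t))) + δ * ENNReal.ofReal t₀
          = ∫⁻ t in Ioo (0 : ℝ) t₀, (μ (ball p (s t)) + δ) := by
        rw [lintegral_add_right _ measurable_const, setLIntegral_const,
          Real.volume_Ioo, sub_zero]
      rw [h1]
      exact setLIntegral_mono' measurableSet_Ioo hdeficit
    have hIci : (∫⁻ t in Ici t₀, μ (ball p (s t)))
        ≤ ∫⁻ t in Ici t₀, volume (ball (0 : EuclideanSpace ℝ (Fin n)) (s t)) :=
      setLIntegral_mono' measurableSet_Ici fun t ht => hcompare t (ht₀pos.trans_le ht)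
    have htotal : (∫⁻ t in Ioi (0 : ℝ), μ (ball p (s t))) + δ * ENNReal.ofReal t₀ ≤ 1 := by
      rw [← hEl, ← hsplit, lintegral_union measurableSet_Ici hdisj,
        lintegral_union measurableSet_Ici hdisj]
      calc (∫⁻ t in Ioo (0 : ℝ) t₀, μ (ball p (s t)))
            + (∫⁻ t in Ici t₀, μ (ball p (s t))) + δ * ENNReal.ofReal t₀
          = ((∫⁻ t in Ioo (0 : ℝ) t₀, μ (ball p (s t))) + δ * ENNReal.ofReal t₀)
            + ∫⁻ t in Ici t₀, μ (ball p (s t)) := by ring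
        _ ≤ _ := add_le_add hIoo hIci
    -- contradiction with hV
    have hA : ∫⁻ x, ENNReal.ofReal (f x) ∂μ = ∫⁻ t in Ioi (0 : ℝ), μ (ball p (s t)) := hXl
    set A : ℝ≥0∞ := ∫⁻ x, ENNReal.ofReal (f x) ∂μ with hAdef
    have hA1 : A + δ * ENNReal.ofReal t₀ ≤ 1 := by rw [hA]; exact htotal
    have hAne : A ≠ ∞ := by
      intro h
      rw [h] at hA1
      simp at hA1
    have hδt : δ * ENNReal.ofReal t₀ ≠ 0 := by
      apply mul_ne_zero hδpos
      simp only [ne_eq, ENNReal.ofReal_eq_zero, not_le]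
      exact ht₀pos
    have hAlt : A < 1 := lt_of_lt_of_le (ENNReal.lt_add_right hAne hδt) hA1
    have hint : ∫ x, f x ∂μ = A.toReal :=
      integral_eq_lintegral_of_nonneg_ae (Eventually.of_forall hf_nonneg)
        hf_cont.aestronglyMeasurable
    have hone : A.toReal = 1 := hint.symm.trans hV
    have hlt1 : A.toReal < 1 := by
      have h2 := (ENNReal.toReal_lt_toReal hAne (by norm_num : (1:ℝ≥0∞) ≠ ∞)).2 hAlt
      simpa using h2
    linarith [hone, hlt1]
  -- conclude
  have hfinr : μ (ball p r) ≠ ∞ := ((hvol r hr).trans_lt ENNReal.ofReal_lt_top).ne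
  rw [← ENNReal.ofReal_toReal hfinr, hmain]
end
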